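/- The number of common vertices of the permutahedron Perm_n and Loday's associahedron Asso_n equals 2^{n-1}: these are exactly the permutations σ such that for every i ∈ [n], either all values before i in σ are larger than i, or all values after i in σ are larger than i. -/

import Mathlib

open Equiv

namespace CommonVerticesAux

/-- The condition on a permutation: every value is a prefix-min or suffix-min. -/
def cond {n : ℕ} (σ : Perm (Fin n)) : Prop :=
  ∀ i : Fin n, (∀ j : Fin n, σ⁻¹ j < σ⁻¹ i → i < j) ∨ (∀ j : Fin n, σ⁻¹ i < σ⁻¹ j → i < j)

/-- The "signed value" function attached to a Boolean labelling. -/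
def gf {n : ℕ} (f : Fin n → Bool) (i : Fin n) : ℤ := if f i then -(i : ℤ) else (i : ℤ)

lemma gf_inj {n : ℕ} (f : Fin n → Bool) : Function.Injective (gf f) := by
  intro i j h
  unfold gf at h
  split_ifs at h <;> (apply Fin.ext; omega)

lemma key_mono {n : ℕ} (σ : Perm (Fin (n + 1))) (hσ : cond σ) :
    ∀ i j, σ⁻¹ j < σ⁻¹ i →
      gf (fun k => decide (σ⁻¹ k < σ⁻¹ 0)) j < gf (fun k => decide (σ⁻¹ k < σ⁻¹ 0)) i := by
  intro i j hji
  unfold gf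
  by_cases hi : σ⁻¹ i < σ⁻¹ 0 <;> by_cases hj : σ⁻¹ j < σ⁻¹ 0 <;>
    simp only [hi, hj, decide_true, decide_false, Bool.false_eq_true, ite_true, ite_false]
  · -- both before 0 : need -(j) < -(i), i.e. i < j
    rcases hσ i with h | h
    · have hij : i < j := h j hji
      have : (i : ℕ) < (j : ℕ) := hij
      omega
    · exact absurd (h 0 hi) (Fin.not_lt_zero i)
  · exact absurd (hji.trans hi) hj
  · -- j before 0, i after : need -(j) < i
    have hj0 : j ≠ 0 := by rintro rfl; exact lt_irrefl _ hj
    have : (j : ℕ) ≠ 0 := by intro h; exact hj0 (Fin.ext h)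
    omega
  · -- both at/after 0 : need j < i
    by_cases hj0 : j = 0
    · subst hj0
      have hi0 : i ≠ 0 := by rintro rfl; exact lt_irrefl _ hji
      have : (i : ℕ) ≠ 0 := by intro h; exact hi0 (Fin.ext h)
      simp only [Fin.val_zero]
      omega
    · have h0j : σ⁻¹ 0 < σ⁻¹ j :=
        lt_of_le_of_ne (not_lt.1 hj) (fun h => hj0 (σ⁻¹.injective h.symm))
      rcases hσ j with h | h
      · exact absurd (h 0 h0j) (Fin.not_lt_zero j)
      · have hij : j < i := h i hji
        have : (j : ℕ) < (i : ℕ) := hij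
        omega

lemma mono_to_iff {n : ℕ} (σ : Perm (Fin n)) (g : Fin n → ℤ)
    (h : ∀ i j, σ⁻¹ j < σ⁻¹ i → g j < g i) :
    ∀ i j, σ⁻¹ j < σ⁻¹ i ↔ g j < g i := by
  intro i j
  refine ⟨h i j, fun hgg => ?_⟩
  rcases lt_trichotomy (σ⁻¹ j) (σ⁻¹ i) with hlt | heq | hgt
  · exact hlt
  · have : j = i := σ⁻¹.injective heq
    subst this
    exact absurd hgg (lt_irrefl _)
  · exact absurd (h j i hgt) (not_lt.2 hgg.le)

lemma perm_unique {n : ℕ} (σ τ : Perm (Fin n)) (g : Fin n → ℤ)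
    (hσ : ∀ i j, σ⁻¹ j < σ⁻¹ i ↔ g j < g i)
    (hτ : ∀ i j, τ⁻¹ j < τ⁻¹ i ↔ g j < g i) : σ = τ := by
  have hsm : StrictMono (fun k => τ⁻¹ (σ k)) := by
    intro k l hkl
    have h1 : σ⁻¹ (σ k) < σ⁻¹ (σ l) := by simpa using hkl
    have h2 : g (σ k) < g (σ l) := (hσ (σ l) (σ k)).1 h1
    exact (hτ (σ l) (σ k)).2 h2
  have hrange : Set.range (fun k => τ⁻¹ (σ k)) = Set.range (id : Fin n → Fin n) := by
    rw [Set.range_id]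
    exact Set.eq_univ_of_forall fun x => ⟨σ⁻¹ (τ x), by simp⟩
  have hwf : WellFoundedLT (Fin n) := inferInstance
  have hid : (fun k => τ⁻¹ (σ k)) = id :=
    (@StrictMono.range_inj (Fin n) (Fin n) _ _ hwf (fun k => τ⁻¹ (σ k)) id hsm strictMono_id).1
      hrange
  apply Equiv.ext
  intro k
  have := congrFun hid k
  simpa using congrArg τ this

lemma sort_iff {n : ℕ} (g : Fin n → ℤ) (hg : Function.Injective g) :
    ∀ i j, (Tuple.sort g)⁻¹ j < (Tuple.sort g)⁻¹ i ↔ g j < g i := by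
  have hsm : StrictMono (g ∘ Tuple.sort g) :=
    (Tuple.monotone_sort g).strictMono_of_injective (hg.comp (Tuple.sort g).injective)
  intro i j
  have := hsm.lt_iff_lt (a := (Tuple.sort g)⁻¹ j) (b := (Tuple.sort g)⁻¹ i)
  simpa [Function.comp] using this.symm

lemma sort_cond {n : ℕ} (f : Fin (n + 1) → Bool) (hf0 : f 0 = false) :
    cond (Tuple.sort (gf f)) := by
  have hiff := sort_iff (gf f) (gf_inj f)
  intro i
  rcases hfi : f i with _ | _
  · right
    intro j hij
    have hg : gf f i < gf f j := (hiff j i).1 hij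
    rw [Fin.lt_def]
    unfold gf at hg
    rcases hfj : f j with _ | _ <;>
      simp only [hfi, hfj, ite_true, ite_false, Bool.false_eq_true] at hg <;> omega
  · left
    intro j hji
    have hg : gf f j < gf f i := (hiff i j).1 hji
    have hi0 : (i : ℕ) ≠ 0 := by
      intro h
      have hi : i = 0 := Fin.ext h
      rw [hi, hf0] at hfi
      exact Bool.noConfusion hfi
    rw [Fin.lt_def]
    unfold gf at hg
    rcases hfj : f j with _ | _ <;>
      simp only [hfi, hfj, ite_true, ite_false, Bool.false_eq_true] at hg <;> omega

lemma sort_right_inv {n : ℕ} (f : Fin (n + 1) → Bool) (hf0 : f 0 = false) (i : Fin (n + 1)) :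
    decide ((Tuple.sort (gf f))⁻¹ i < (Tuple.sort (gf f))⁻¹ 0) = f i := by
  have hiff := sort_iff (gf f) (gf_inj f)
  have hg0 : gf f 0 = 0 := by simp [gf, hf0]
  rcases hfi : f i with _ | _
  · have h : ¬ (Tuple.sort (gf f))⁻¹ i < (Tuple.sort (gf f))⁻¹ 0 := by
      rw [hiff 0 i, hg0]
      simp only [gf, hfi, ite_false, Bool.false_eq_true]
      omega
    simpa using h
  · have hi0 : (i : ℕ) ≠ 0 := by
      intro h
      have hi : i = 0 := Fin.ext h
      rw [hi, hf0] at hfi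
      exact Bool.noConfusion hfi
    have h : (Tuple.sort (gf f))⁻¹ i < (Tuple.sort (gf f))⁻¹ 0 := by
      rw [hiff 0 i, hg0]
      simp only [gf, hfi, ite_true]
      omega
    simpa using h

/-- The main bijection. -/
noncomputable def mainEquiv (n : ℕ) :
    {σ : Perm (Fin (n + 1)) // cond σ} ≃ {f : Fin (n + 1) → Bool // f 0 = false} where
  toFun σ := ⟨fun i => decide (σ.1⁻¹ i < σ.1⁻¹ 0), by simp⟩
  invFun f := ⟨Tuple.sort (gf f.1), sort_cond f.1 f.2⟩
  left_inv := by
    rintro ⟨σ, hσ⟩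
    apply Subtype.ext
    exact perm_unique _ σ (gf (fun k => decide (σ⁻¹ k < σ⁻¹ 0)))
      (sort_iff _ (gf_inj _)) (mono_to_iff σ _ (key_mono σ hσ))
  right_inv := by
    rintro ⟨f, hf0⟩
    apply Subtype.ext
    funext i
    exact sort_right_inv f hf0 i

/-- Counting Boolean functions vanishing at `0`. -/
def boolEquiv (n : ℕ) :
    {f : Fin (n + 1) → Bool // f 0 = false} ≃ ({i : Fin (n + 1) // i ≠ 0} → Bool) where
  toFun f i := f.1 i.1
  invFun h := ⟨fun i => if hi : i = 0 then false else h ⟨i, hi⟩, by simp⟩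
  left_inv := by
    rintro ⟨f, hf0⟩
    apply Subtype.ext
    funext i
    by_cases hi : i = 0
    · subst hi; simp [hf0]
    · simp [hi]
  right_inv := by
    intro h
    funext i
    simp [i.2]

end CommonVerticesAux

/-- The number of permutations `σ ∈ S_n` such that for every value `i`, either all
values appearing before `i` in the one-line notation of `σ` are larger than `i`, or
all values appearing after `i` are larger than `i`, equals `2^(n-1)`.  These
permutations correspond to the common vertices of the permutahedron and of Loday's
associahedron. -/
theorem card_common_vertices_perm_asso (n : ℕ) (hn : 1 ≤ n) :
    Nat.card {σ : Perm (Fin n) //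
      ∀ i : Fin n, (∀ j : Fin n, σ⁻¹ j < σ⁻¹ i → i < j) ∨
                   (∀ j : Fin n, σ⁻¹ i < σ⁻¹ j → i < j)} = 2 ^ (n - 1) := by
  obtain ⟨m, rfl⟩ : ∃ m, n = m + 1 := ⟨n - 1, (Nat.succ_pred_eq_of_pos hn).symm⟩
  have h1 : Nat.card {σ : Perm (Fin (m + 1)) // CommonVerticesAux.cond σ} = 2 ^ m := by
    rw [Nat.card_congr (CommonVerticesAux.mainEquiv m),
      Nat.card_congr (CommonVerticesAux.boolEquiv m), Nat.card_eq_fintype_card,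
      Fintype.card_fun, Fintype.card_bool]
    congr 1
    have h0 : Fintype.card {i : Fin (m + 1) // i = 0} = 1 :=
      Fintype.card_subtype_eq (0 : Fin (m + 1))
    have h2 : Fintype.card {i : Fin (m + 1) // i ≠ 0} =
        Fintype.card (Fin (m + 1)) - Fintype.card {i : Fin (m + 1) // i = 0} :=
      Fintype.card_subtype_compl _
    rw [h2, h0, Fintype.card_fin]
    omega
  exact h1
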